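/- Dulmage–Mendelsohn-type lemma: given a bipartite compatibility relation between patients and vaccine units and two compatible matchings μ1 and μ2, there exists a compatible matching μ3 that matches every patient who is matched under μ1 and saturates every vaccine unit that is used under μ2. -/
import Mathlib


/-- A set of pairwise vertex-disjoint edges in a bipartite graph between `X` and `Y`. -/
def IsMatching {X Y : Type*} (μ : Set (X × Y)) : Prop :=
  ∀ e ∈ μ, ∀ e' ∈ μ, e ≠ e' → e.1 ≠ e'.1 ∧ e.2 ≠ e'.2

/-- `Y`-vertices reachable by alternating μ2/μ1 paths from a μ2-matched, μ1-unmatched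
`Y`-vertex. -/
inductive Reach {X Y : Type*} (μ1 μ2 : Set (X × Y)) : Y → Prop
  | base (y : Y) (h2 : ∃ x, (x, y) ∈ μ2) (h1 : ¬ ∃ x, (x, y) ∈ μ1) : Reach μ1 μ2 y
  | step (y y' : Y) (x : X) (hy : Reach μ1 μ2 y) (hx2 : (x, y) ∈ μ2)
      (hx1 : (x, y') ∈ μ1) : Reach μ1 μ2 y'

theorem matching_eq_of_fst {X Y : Type*} {μ : Set (X × Y)} (h : IsMatching μ)
    {e e' : X × Y} (he : e ∈ μ) (he' : e' ∈ μ) (hf : e.1 = e'.1) : e = e' := by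
  by_contra hne
  exact (h e he e' he' hne).1 hf

theorem matching_eq_of_snd {X Y : Type*} {μ : Set (X × Y)} (h : IsMatching μ)
    {e e' : X × Y} (he : e ∈ μ) (he' : e' ∈ μ) (hf : e.2 = e'.2) : e = e' := by
  by_contra hne
  exact (h e he e' he' hne).2 hf

/-- Dulmage–Mendelsohn: given two compatible matchings `μ1` and `μ2`, there is a
compatible matching `μ3` matching every `X`-vertex matched by `μ1` and saturating every
`Y`-vertex used by `μ2`. -/
theorem dulmage_mendelsohn {X Y : Type*} (E μ1 μ2 : Set (X × Y))
    (h1 : IsMatching μ1) (h2 : IsMatching μ2) (h1E : μ1 ⊆ E) (h2E : μ2 ⊆ E) :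
    ∃ μ3 : Set (X × Y), μ3 ⊆ E ∧ IsMatching μ3 ∧
      (∀ x : X, (∃ y, (x, y) ∈ μ1) → ∃ y, (x, y) ∈ μ3) ∧
      (∀ y : Y, (∃ x, (x, y) ∈ μ2) → ∃ x, (x, y) ∈ μ3) := by
  classical
  set S : Y → Prop := Reach μ1 μ2 with hS
  refine ⟨{e | e ∈ μ1 ∧ ¬ S e.2} ∪ {e | e ∈ μ2 ∧ S e.2}, ?_, ?_, ?_, ?_⟩
  · rintro e (⟨he, -⟩ | ⟨he, -⟩)
    · exact h1E he
    · exact h2E he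
  · rintro e (⟨he, hre⟩ | ⟨he, hre⟩) e' (⟨he', hre'⟩ | ⟨he', hre'⟩) hne
    · exact h1 e he e' he' hne
    · constructor
      · intro hf
        exact hre (Reach.step e'.2 e.2 e.1 hre' (by rw [hf]; exact he') he)
      · intro hs
        exact hre (hs ▸ hre')
    · constructor
      · intro hf
        exact hre' (Reach.step e.2 e'.2 e'.1 hre (by rw [← hf]; exact he) he')
      · intro hs
        exact hre' (hs ▸ hre)
    · exact h2 e he e' he' hne
  · rintro x ⟨y, hxy⟩
    by_cases hy : S y
    · cases hy with
      | base _ h2' h1' => exact absurd ⟨x, hxy⟩ h1'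
      | step y0 _ x0 hy0 hx2 hx1 =>
        have : (x0, y) = (x, y) := matching_eq_of_snd h1 hx1 hxy rfl
        have hx0 : x0 = x := congrArg Prod.fst this
        exact ⟨y0, Or.inr ⟨hx0 ▸ hx2, hy0⟩⟩
    · exact ⟨y, Or.inl ⟨hxy, hy⟩⟩
  · rintro y ⟨x, hxy⟩
    by_cases hy : S y
    · exact ⟨x, Or.inr ⟨hxy, hy⟩⟩
    · by_cases hy1 : ∃ x', (x', y) ∈ μ1
      · obtain ⟨x', hx'⟩ := hy1
        exact ⟨x', Or.inl ⟨hx', hy⟩⟩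
      · exact absurd (Reach.base y ⟨x, hxy⟩ hy1) hy
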